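/- Let G be a graph with maximum degree at most d ≥ 1, and let v be a vertex of G. Then the number of 2-trees in G of size ℓ ≥ 1 containing v is at most (e·d²)^{ℓ-1} / 2 · 2, i.e., at most (e·d²)^{ℓ-1}. -/

import Mathlib

/-- The auxiliary "distance-2" graph: two vertices are adjacent iff their
distance in `G` is exactly 2. -/
def auxGraph {V : Type*} (G : SimpleGraph V) : SimpleGraph V :=
  SimpleGraph.fromRel (fun u v => G.dist u v = 2)

/-- A 2-tree in `G`: a finite set of vertices pairwise at distance at least 2,
connected in the auxiliary distance-2 graph. -/
def IsTwoTree {V : Type*} (G : SimpleGraph V) (T : Finset V) : Prop :=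
  (∀ u ∈ T, ∀ v ∈ T, u ≠ v → 2 ≤ G.dist u v) ∧
  (SimpleGraph.induce (T : Set V) (auxGraph G)).Connected

open SimpleGraph

lemma exists_parent {W : Type*} {H : SimpleGraph W} (hconn : H.Connected) (r x : W)
    (hx : x ≠ r) : ∃ y, H.Adj x y ∧ H.dist r y + 1 = H.dist r x := by
  have hpos : 0 < H.dist r x := hconn.pos_dist_of_ne (Ne.symm hx)
  obtain ⟨p, hp⟩ := (hconn r x).exists_walk_length_eq_dist
  obtain ⟨y, hadj, q, hq⟩ := p.reverse.exists_eq_cons_of_ne hx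
  refine ⟨y, hadj, ?_⟩
  have hql : q.length + 1 = H.dist r x := by
    have := congrArg Walk.length hq
    simpa [Walk.length_reverse, hp] using this.symm
  have h1 : H.dist r y ≤ q.length := by
    have := SimpleGraph.dist_le q.reverse
    simpa [Walk.length_reverse, SimpleGraph.dist_comm] using this
  have h2 : H.dist r x ≤ H.dist r y + 1 := by
    have := hconn.dist_triangle (u := r) (v := y) (w := x)
    have hyx : H.dist y x = 1 := by
      rw [SimpleGraph.dist_eq_one_iff_adj]; exact hadj.symm
    omega
  omega

lemma exists_mid {V : Type*} {G : SimpleGraph V} {u w : V} (h : G.dist u w = 2) :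
    ∃ m, G.Adj u m ∧ G.Adj m w := by
  obtain ⟨p, hp⟩ := SimpleGraph.exists_walk_of_dist_ne_zero (by omega : G.dist u w ≠ 0)
  rw [h] at hp
  cases p with
  | nil => simp at hp
  | cons hadj q =>
    cases q with
    | nil => simp at hp
    | cons hadj2 q2 =>
      cases q2 with
      | nil => exact ⟨_, hadj, hadj2⟩
      | cons h3 q3 => simp [Nat.add_assoc] at hp

open Finset in
lemma key_count {V : Type*} [Fintype V] [DecidableEq V] [LinearOrder V]
    (G : SimpleGraph V) [DecidableRel G.Adj] (d k : ℕ) (hd : 1 ≤ d)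
    (hdeg : ∀ v, G.degree v ≤ d) (v : V) :
    {T : Finset V | v ∈ T ∧ T.card = k + 1 ∧ IsTwoTree G T}.ncard * k.factorial
      ≤ ((k + 1) * (d * d)) ^ k := by
  classical
  set S : Finset (Finset V) :=
    univ.filter (fun T => v ∈ T ∧ T.card = k + 1 ∧ IsTwoTree G T) with hS
  have hncard : {T : Finset V | v ∈ T ∧ T.card = k + 1 ∧ IsTwoTree G T}.ncard = S.card := by
    rw [← Set.ncard_coe_finset]
    congr 1
    ext T; simp [hS]
  rw [hncard]
  -- the sorted-neighbor lookup function
  set nth : V → ℕ → V := fun u a => ((G.neighborFinset u).sort (· ≤ ·)).getD a u with hnth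
  -- the set of (tree, enumeration) pairs
  set A : Finset (Finset V × (Fin (k + 1) → V)) :=
    univ.filter (fun x => x.1 ∈ S ∧ Function.Injective x.2 ∧ (∀ i, x.2 i ∈ x.1) ∧ x.2 0 = v)
    with hA
  -- every x ∈ A has its tree equal to the image of its enumeration
  have himg : ∀ x ∈ A, x.1 = Finset.image x.2 univ := by
    intro x hx
    obtain ⟨hxS, hinj, hmemT, hx0⟩ := (mem_filter.mp hx).2
    have hcard : x.1.card = k + 1 := ((mem_filter.mp hxS).2).2.1
    refine (Finset.eq_of_subset_of_card_le ?_ ?_).symm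
    · intro w hw
      obtain ⟨j, _, rfl⟩ := Finset.mem_image.mp hw
      exact hmemT j
    · rw [Finset.card_image_of_injective _ hinj, Finset.card_univ, Fintype.card_fin, hcard]
  -- Step 1 : S.card * k! ≤ A.card
  have step1 : S.card * k.factorial ≤ A.card := by
    have hproj : ∀ x ∈ A, x.1 ∈ S := by
      intro x hx; exact ((mem_filter.mp hx).2).1
    rw [Finset.card_eq_sum_card_fiberwise hproj]
    have hfiber : ∀ T ∈ S, k.factorial ≤ (A.filter (fun x => x.1 = T)).card := by
      intro T hT
      obtain ⟨hvT, hcard, htree⟩ := (mem_filter.mp hT).2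
      have hek : (T.erase v).card = k := by
        rw [Finset.card_erase_of_mem hvT, hcard]; rfl
      set t := (T.erase v).orderIsoOfFin hek with ht
      have hcle := Finset.card_le_card_of_injOn
        (s := (univ : Finset (Equiv.Perm (Fin k))))
        (t := A.filter (fun x => x.1 = T))
        (fun π => ((T, Fin.cons v (fun i => (t (π i) : V))) : Finset V × (Fin (k + 1) → V)))
        ?_ ?_
      · calc k.factorial = Fintype.card (Equiv.Perm (Fin k)) := by
              rw [Fintype.card_perm, Fintype.card_fin]
          _ = (univ : Finset (Equiv.Perm (Fin k))).card := Finset.card_univ.symm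
          _ ≤ _ := hcle
      · intro π _
        rw [Finset.mem_coe, mem_filter]
        refine ⟨?_, rfl⟩
        rw [hA, mem_filter]
        refine ⟨mem_univ _, hT, ?_, ?_, ?_⟩
        · rw [Fin.cons_injective_iff]
          constructor
          · rintro ⟨i, hi⟩
            exact (Finset.ne_of_mem_erase (t (π i)).2) hi
          · intro i j hij
            exact π.injective (t.injective (Subtype.ext hij))
        · intro i
          refine Fin.cases ?_ ?_ i
          · simpa using hvT
          · intro j
            simpa using Finset.mem_of_mem_erase (t (π j)).2
        · simp
      · intro π _ π' _ heq
        have h2 := congrArg Prod.snd heq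
        ext i
        have := congrFun h2 i.succ
        simp only [Fin.cons_succ] at this
        exact congrArg Fin.val (t.injective (Subtype.ext this))
    calc S.card * k.factorial = ∑ _T ∈ S, k.factorial := by
          rw [Finset.sum_const, smul_eq_mul, mul_comm]
      _ ≤ ∑ T ∈ S, (A.filter (fun x => x.1 = T)).card := Finset.sum_le_sum hfiber
  -- Step 2 : the coding map
  have main : ∀ x : Finset V × (Fin (k + 1) → V), x ∈ A →
      ∃ (c : Fin k → Fin (k + 1) × Fin d × Fin d) (ρ : Fin (k + 1) → ℕ),
        (∀ j, ρ j = 0 ↔ j = 0) ∧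
        (∀ i : Fin k, ρ (c i).1 < ρ i.succ ∧
          x.2 i.succ = nth (nth (x.2 (c i).1) (c i).2.1) (c i).2.2) := by
    intro x hx
    obtain ⟨hxS, hinj, hmemT, hx0⟩ := (mem_filter.mp hx).2
    obtain ⟨hvT, hcard, hsep, hconn⟩ := (mem_filter.mp hxS).2
    have hmem' : ∀ i, x.2 i ∈ (x.1 : Set V) := fun i => hmemT i
    set H := SimpleGraph.induce (x.1 : Set V) (auxGraph G) with hH
    set r : (x.1 : Set V) := ⟨v, hvT⟩ with hr
    set ρ : Fin (k + 1) → ℕ := fun j => H.dist r ⟨x.2 j, hmem' j⟩ with hρ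
    have hsurj : ∀ w ∈ x.1, ∃ j, x.2 j = w := by
      intro w hw
      rw [himg x hx] at hw
      obtain ⟨j, _, hj⟩ := Finset.mem_image.mp hw
      exact ⟨j, hj⟩
    have hρ0 : ∀ j, ρ j = 0 ↔ j = 0 := by
      intro j
      constructor
      · intro h
        have hrr : r = (⟨x.2 j, hmem' j⟩ : (x.1 : Set V)) := hconn.dist_eq_zero_iff.mp h
        apply hinj
        rw [hx0]
        exact (congrArg Subtype.val hrr).symm
      · rintro rfl
        have hrr : (⟨x.2 0, hmem' 0⟩ : (x.1 : Set V)) = r := Subtype.ext hx0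
        rw [hρ]; dsimp only; rw [hrr, SimpleGraph.dist_self]
    have step : ∀ i : Fin k, ∃ e : Fin (k + 1) × Fin d × Fin d,
        ρ e.1 < ρ i.succ ∧ x.2 i.succ = nth (nth (x.2 e.1) e.2.1) e.2.2 := by
      intro i
      have hne : x.2 i.succ ≠ v := by
        intro h
        exact (Fin.succ_ne_zero i) (hinj (h.trans hx0.symm))
      have hner : (⟨x.2 i.succ, hmem' i.succ⟩ : (x.1 : Set V)) ≠ r :=
        fun h => hne (Subtype.ext_iff.mp h)
      obtain ⟨y, hyadj, hydist⟩ := exists_parent hconn r _ hner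
      have haux : (auxGraph G).Adj (x.2 i.succ) (y : V) := hyadj
      have h2 : G.dist (y : V) (x.2 i.succ) = 2 := by
        rw [auxGraph, SimpleGraph.fromRel_adj] at haux
        rcases haux.2 with h | h
        · rw [SimpleGraph.dist_comm]; exact h
        · exact h
      obtain ⟨m, hm1, hm2⟩ := exists_mid h2
      obtain ⟨p, hp⟩ := hsurj (y : V) y.2
      have hlen1 : ((G.neighborFinset (y : V)).sort (· ≤ ·)).length ≤ d := by
        rw [Finset.length_sort, SimpleGraph.card_neighborFinset_eq_degree]; exact hdeg _
      have hlen2 : ((G.neighborFinset m).sort (· ≤ ·)).length ≤ d := by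
        rw [Finset.length_sort, SimpleGraph.card_neighborFinset_eq_degree]; exact hdeg _
      have hmmem : m ∈ (G.neighborFinset (y : V)).sort (· ≤ ·) := by
        rw [Finset.mem_sort, SimpleGraph.mem_neighborFinset]; exact hm1
      have hwmem : x.2 i.succ ∈ (G.neighborFinset m).sort (· ≤ ·) := by
        rw [Finset.mem_sort, SimpleGraph.mem_neighborFinset]; exact hm2
      have ha : List.idxOf m ((G.neighborFinset (y : V)).sort (· ≤ ·)) < d :=
        lt_of_lt_of_le (List.idxOf_lt_length_iff.mpr hmmem) hlen1
      have hb : List.idxOf (x.2 i.succ) ((G.neighborFinset m).sort (· ≤ ·)) < d :=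
        lt_of_lt_of_le (List.idxOf_lt_length_iff.mpr hwmem) hlen2
      refine ⟨(p, ⟨_, ha⟩, ⟨_, hb⟩), ?_, ?_⟩
      · have hρp : ρ p = H.dist r y := by
          rw [hρ]; dsimp only; congr 1; exact Subtype.ext hp
        have hρs : ρ i.succ = H.dist r ⟨x.2 i.succ, hmem' i.succ⟩ := by rw [hρ]
        dsimp only
        rw [hρp, hρs]
        omega
      · dsimp only
        rw [hnth]
        dsimp only
        rw [hp]
        rw [List.getD_eq_getElem _ _ (List.idxOf_lt_length_iff.mpr hmmem),
          List.getElem_idxOf]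
        rw [List.getD_eq_getElem _ _ (List.idxOf_lt_length_iff.mpr hwmem),
          List.getElem_idxOf]
    choose e he using step
    exact ⟨e, ρ, hρ0, he⟩
  choose c ρ hρ0 hstep using main
  have step2 : A.card ≤ ((k + 1) * (d * d)) ^ k := by
    have hd0 : 0 < d := hd
    set Φ : (Finset V × (Fin (k + 1) → V)) → (Fin k → Fin (k + 1) × Fin d × Fin d) :=
      fun x => if h : x ∈ A then c x h else fun _ => (0, ⟨0, hd0⟩, ⟨0, hd0⟩) with hΦ
    have hcle := Finset.card_le_card_of_injOn (s := A) (t := univ) Φ (fun x _ => Finset.mem_univ _) ?_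
    · calc A.card ≤ (univ : Finset (Fin k → Fin (k + 1) × Fin d × Fin d)).card := hcle
        _ = ((k + 1) * (d * d)) ^ k := by
            rw [Finset.card_univ, Fintype.card_fun]
            simp [Fintype.card_prod]
    · intro x hx x' hx' heq
      rw [Finset.mem_coe] at hx hx'
      rw [hΦ] at heq
      simp only [dif_pos hx, dif_pos hx'] at heq
      obtain ⟨hxS, hinj, hmemT, hx0⟩ := (mem_filter.mp hx).2
      obtain ⟨hxS', hinj', hmemT', hx0'⟩ := (mem_filter.mp hx').2
      have hf : x.2 = x'.2 := by
        have key : ∀ n, ∀ j, ρ x hx j < n → x.2 j = x'.2 j := by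
          intro n
          induction n with
          | zero => intro j hj; omega
          | succ n ih =>
            intro j hj
            by_cases h0 : j = 0
            · subst h0; rw [hx0, hx0']
            · obtain ⟨i, rfl⟩ := Fin.eq_succ_of_ne_zero h0
              have h1 := hstep x hx i
              have h2 := hstep x' hx' i
              have hcc : c x hx i = c x' hx' i := congrFun heq i
              have hρj : ρ x hx (c x hx i).1 < n := by
                have := h1.1
                omega
              have hpeq : x.2 (c x hx i).1 = x'.2 (c x hx i).1 := ih _ hρj
              rw [h1.2, h2.2, ← hcc, hpeq]
        funext j
        exact key (ρ x hx j + 1) j (Nat.lt_succ_self _)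
      have hT : x.1 = x'.1 := by
        rw [himg x hx, himg x' hx', hf]
      exact Prod.ext hT hf
  calc S.card * k.factorial ≤ A.card := step1
    _ ≤ ((k + 1) * (d * d)) ^ k := step2

lemma pow_succ_le_exp_mul_factorial :
    ∀ k : ℕ, ((k : ℝ) + 1) ^ k ≤ Real.exp 1 ^ k * (k.factorial : ℝ) := by
  intro k
  induction k with
  | zero => simp
  | succ k ih =>
    have hk1 : (0:ℝ) < (k:ℝ) + 1 := by positivity
    have hbase : ((k:ℝ) + 2) ≤ ((k:ℝ)+1) * Real.exp (1/((k:ℝ)+1)) := by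
      have := Real.add_one_le_exp (1/((k:ℝ)+1))
      calc ((k:ℝ) + 2) = ((k:ℝ)+1) * (1/((k:ℝ)+1) + 1) := by field_simp; ring
        _ ≤ ((k:ℝ)+1) * Real.exp (1/((k:ℝ)+1)) := by
            apply mul_le_mul_of_nonneg_left this (le_of_lt hk1)
    have hpow : ((k:ℝ) + 2) ^ (k+1) ≤ (((k:ℝ)+1) * Real.exp (1/((k:ℝ)+1))) ^ (k+1) := by
      apply pow_le_pow_left₀ (by positivity) hbase
    have hexp : Real.exp (1/((k:ℝ)+1)) ^ (k+1) = Real.exp 1 := by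
      rw [← Real.exp_nat_mul, mul_one_div]
      congr 1
      push_cast
      field_simp
    push_cast
    calc ((k:ℝ) + 1 + 1) ^ (k+1) = ((k:ℝ)+2) ^ (k+1) := by ring_nf
      _ ≤ (((k:ℝ)+1) * Real.exp (1/((k:ℝ)+1))) ^ (k+1) := hpow
      _ = ((k:ℝ)+1)^(k+1) * Real.exp 1 := by rw [mul_pow, hexp]
      _ = ((k:ℝ)+1) * ((k:ℝ)+1)^k * Real.exp 1 := by ring
      _ ≤ ((k:ℝ)+1) * (Real.exp 1 ^ k * (k.factorial : ℝ)) * Real.exp 1 := by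
          apply mul_le_mul_of_nonneg_right _ (Real.exp_pos 1).le
          exact mul_le_mul_of_nonneg_left ih (le_of_lt hk1)
      _ = Real.exp 1 ^ (k+1) * (((k:ℝ)+1) * (k.factorial : ℝ)) := by ring
      _ = Real.exp 1 ^ (k+1) * (((k+1).factorial : ℕ) : ℝ) := by
          rw [Nat.factorial_succ]; push_cast; ring

theorem stmt3 {V : Type*} [Fintype V] [DecidableEq V] (G : SimpleGraph V)
    [DecidableRel G.Adj] (d ℓ : ℕ) (hd : 1 ≤ d) (hdeg : ∀ v, G.degree v ≤ d)
    (hℓ : 1 ≤ ℓ) (v : V) :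
    (({T : Finset V | v ∈ T ∧ T.card = ℓ ∧ IsTwoTree G T}.ncard : ℝ)) ≤
      (Real.exp 1 * (d : ℝ) ^ 2) ^ (ℓ - 1) := by
  letI : LinearOrder V := LinearOrder.lift' (Fintype.equivFin V) (Fintype.equivFin V).injective
  obtain ⟨k, rfl⟩ : ∃ k, ℓ = k + 1 := ⟨ℓ - 1, (Nat.succ_pred_eq_of_pos hℓ).symm⟩
  simp only [Nat.add_sub_cancel]
  have hkey := key_count G d k hd hdeg v
  set N := {T : Finset V | v ∈ T ∧ T.card = k + 1 ∧ IsTwoTree G T}.ncard with hN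
  have h1 : (N : ℝ) * (k.factorial : ℝ) ≤ (((k : ℝ) + 1) * ((d : ℝ) * d)) ^ k := by
    calc (N : ℝ) * (k.factorial : ℝ) = ((N * k.factorial : ℕ) : ℝ) := by push_cast; ring
      _ ≤ ((((k + 1) * (d * d)) ^ k : ℕ) : ℝ) := by exact_mod_cast hkey
      _ = (((k : ℝ) + 1) * ((d : ℝ) * d)) ^ k := by push_cast; ring
  have hfact : (0 : ℝ) < (k.factorial : ℝ) := by
    exact_mod_cast k.factorial_pos
  have h2 : (N : ℝ) * (k.factorial : ℝ) ≤ (Real.exp 1 * (d : ℝ) ^ 2) ^ k * (k.factorial : ℝ) := by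
    calc (N : ℝ) * (k.factorial : ℝ) ≤ (((k : ℝ) + 1) * ((d : ℝ) * d)) ^ k := h1
      _ = ((k : ℝ) + 1) ^ k * ((d : ℝ) * d) ^ k := by rw [mul_pow]
      _ ≤ (Real.exp 1 ^ k * (k.factorial : ℝ)) * ((d : ℝ) * d) ^ k := by
          apply mul_le_mul_of_nonneg_right (pow_succ_le_exp_mul_factorial k) (by positivity)
      _ = (Real.exp 1 * (d : ℝ) ^ 2) ^ k * (k.factorial : ℝ) := by
          rw [mul_pow]; ring
  exact le_of_mul_le_mul_right h2 hfact
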